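/- For every Υ ∈ (0,1) there exists a constant C > 0 (depending only on Υ) such that for all positive integers k and N with k ≥ (1 − Υ/10)·N, and all x ∈ [−2+Υ, 2−Υ]: |ψ_k(x·√N)| ≤ C·k^{−1/4}. -/

import Mathlib

open MeasureTheory Real Filter Set

open Polynomial Topology

set_option maxHeartbeats 2000000

noncomputable section

/-- The `k`-th Hermite function (probabilist's normalization). -/
def hermiteFun (k : ℕ) (x : ℝ) : ℝ :=
  (Polynomial.aeval x (Polynomial.hermite k)) * Real.exp (-x ^ 2 / 4) /
    Real.sqrt (Real.sqrt (2 * Real.pi) * (Nat.factorial k))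

lemma hermite_derivative (n : ℕ) :
    (Polynomial.hermite (n+1)).derivative = C ((n : ℤ)+1) * Polynomial.hermite n := by
  induction n with
  | zero => simp [Polynomial.hermite_one]
  | succ m ih =>
      rw [hermite_succ (m+1), derivative_sub, derivative_mul, derivative_X, ih,
        derivative_mul, derivative_C, hermite_succ m]
      push_cast
      simp only [map_add, map_one, map_ofNat, map_natCast]
      ring

lemma hermite_aeval_neg (n : ℕ) (x : ℝ) :
    (Polynomial.aeval (-x) (Polynomial.hermite n) : ℝ)
      = (-1)^n * Polynomial.aeval x (Polynomial.hermite n) := by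
  induction n using Nat.strong_induction_on with
  | _ n ih =>
    match n with
    | 0 => simp
    | 1 => simp [Polynomial.hermite_one]
    | (m+2) =>
      rw [hermite_succ (m+1), hermite_derivative m]
      simp only [map_sub, map_mul, map_add, Polynomial.aeval_X, Polynomial.aeval_C]
      rw [ih (m+1) (by omega), ih m (by omega)]
      push_cast
      ring

lemma hermite_ode (k : ℕ) (x : ℝ) :
    (Polynomial.aeval x (derivative (derivative (Polynomial.hermite k))) : ℝ)
      = x * Polynomial.aeval x (derivative (Polynomial.hermite k))
        - k * Polynomial.aeval x (Polynomial.hermite k) := by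
  match k with
  | 0 => simp
  | (m+1) =>
    rw [hermite_derivative m, derivative_mul, derivative_C, hermite_succ m]
    simp only [map_sub, map_mul, map_add, Polynomial.aeval_X, Polynomial.aeval_C, map_zero]
    push_cast
    ring

/-- unnormalized Hermite function -/
def Hf (k : ℕ) (x : ℝ) : ℝ := (Polynomial.aeval x (Polynomial.hermite k) : ℝ) * Real.exp (-x^2/4)

def Hg (k : ℕ) (x : ℝ) : ℝ :=
  ((Polynomial.aeval x (derivative (Polynomial.hermite k)) : ℝ)
    - x/2 * Polynomial.aeval x (Polynomial.hermite k)) * Real.exp (-x^2/4)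

def om2 (k : ℕ) (x : ℝ) : ℝ := (k:ℝ) + 1/2 - x^2/4

lemma hasDerivAt_gauss (x : ℝ) :
    HasDerivAt (fun y : ℝ => Real.exp (-y^2/4)) (-x/2 * Real.exp (-x^2/4)) x := by
  have h : HasDerivAt (fun y : ℝ => -y^2/4) (-x/2) x := by
    have := ((hasDerivAt_pow 2 x).neg).div_const 4
    refine this.congr_deriv ?_
    ring
  have h2 := (Real.hasDerivAt_exp (-x^2/4)).comp x h
  exact h2.congr_deriv (mul_comm _ _)

lemma Hf_hasDeriv (k : ℕ) (x : ℝ) : HasDerivAt (Hf k) (Hg k x) x := by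
  have h := ((Polynomial.hermite k).hasDerivAt_aeval (𝕜 := ℝ) x).mul (hasDerivAt_gauss x)
  refine h.congr_deriv ?_
  unfold Hg
  ring

lemma Hg_hasDeriv (k : ℕ) (x : ℝ) : HasDerivAt (Hg k) (-(om2 k x) * Hf k x) x := by
  have h1 : HasDerivAt (fun y : ℝ => (Polynomial.aeval y (derivative (Polynomial.hermite k)) : ℝ)
      - y/2 * Polynomial.aeval y (Polynomial.hermite k))
      ((Polynomial.aeval x (derivative (derivative (Polynomial.hermite k))) : ℝ)
        - (1/2 * Polynomial.aeval x (Polynomial.hermite k)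
           + x/2 * Polynomial.aeval x (derivative (Polynomial.hermite k)))) x := by
    have ha := (derivative (Polynomial.hermite k)).hasDerivAt_aeval (𝕜 := ℝ) x
    have hb := ((hasDerivAt_id x).div_const 2).mul ((Polynomial.hermite k).hasDerivAt_aeval (𝕜 := ℝ) x)
    exact ha.sub hb
  have h := h1.mul (hasDerivAt_gauss x)
  refine h.congr_deriv ?_
  rw [hermite_ode]
  unfold Hf om2
  ring

def Rf (k : ℕ) (x : ℝ) : ℝ := om2 k x * (Hf k x)^2 + (Hg k x)^2

def Qf (k : ℕ) (x : ℝ) : ℝ := (Hf k x)^2 + (Hg k x)^2 / om2 k x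

lemma om2_hasDeriv (k : ℕ) (x : ℝ) : HasDerivAt (om2 k) (-x/2) x := by
  have h := ((hasDerivAt_pow 2 x).div_const 4).const_sub ((k:ℝ) + 1/2)
  refine h.congr_deriv ?_
  norm_num
  ring

lemma Rf_hasDeriv (k : ℕ) (x : ℝ) : HasDerivAt (Rf k) (-x/2 * (Hf k x)^2) x := by
  have h := ((om2_hasDeriv k x).mul ((Hf_hasDeriv k x).pow 2)).add ((Hg_hasDeriv k x).pow 2)
  refine h.congr_deriv ?_
  simp only [Pi.pow_apply]
  ring

lemma Hf_cont (k : ℕ) : Continuous (Hf k) := by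
  refine continuous_iff_continuousAt.2 (fun x => ?_)
  exact (Hf_hasDeriv k x).differentiableAt.continuousAt

lemma Hg_cont (k : ℕ) : Continuous (Hg k) := by
  refine continuous_iff_continuousAt.2 (fun x => ?_)
  exact (Hg_hasDeriv k x).differentiableAt.continuousAt

lemma om2_cont (k : ℕ) : Continuous (om2 k) := by
  refine continuous_iff_continuousAt.2 (fun x => ?_)
  exact (om2_hasDeriv k x).differentiableAt.continuousAt

lemma Qf_hasDeriv (k : ℕ) (x : ℝ) (hx : om2 k x ≠ 0) :
    HasDerivAt (Qf k) (x/2 * (Hg k x)^2 / (om2 k x)^2) x := by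
  have h := ((Hf_hasDeriv k x).pow 2).add
    (((Hg_hasDeriv k x).pow 2).div (om2_hasDeriv k x) hx)
  refine h.congr_deriv ?_
  simp only [Pi.pow_apply]
  field_simp
  ring

lemma Rf_cont (k : ℕ) : Continuous (Rf k) := by
  unfold Rf
  exact ((om2_cont k).mul ((Hf_cont k).pow 2)).add ((Hg_cont k).pow 2)

lemma Rf_antitone (k : ℕ) (p b : ℝ) (hp : 0 ≤ p) :
    AntitoneOn (Rf k) (Icc p b) := by
  refine antitoneOn_of_deriv_nonpos (convex_Icc p b) (Rf_cont k).continuousOn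
    (fun x _ => (Rf_hasDeriv k x).differentiableAt.differentiableWithinAt) (fun x hx => ?_)
  rw [(Rf_hasDeriv k x).deriv]
  rw [interior_Icc] at hx
  have hx0 : 0 < x := lt_of_le_of_lt hp hx.1
  nlinarith [sq_nonneg (Hf k x)]

lemma Qf_monotone (k : ℕ) (p b A : ℝ) (hp : 0 ≤ p) (hA : 0 < A)
    (hom : ∀ t ∈ Icc p b, A ≤ om2 k t) :
    MonotoneOn (Qf k) (Icc p b) := by
  refine monotoneOn_of_deriv_nonneg (convex_Icc p b) ?_ ?_ (fun x hx => ?_)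
  · refine ((Hf_cont k).pow 2).continuousOn.add
      (((Hg_cont k).pow 2).continuousOn.div (om2_cont k).continuousOn (fun t ht => ?_))
    exact ne_of_gt (lt_of_lt_of_le hA (hom t ht))
  · intro x hx
    rw [interior_Icc] at hx
    have hx' : om2 k x ≠ 0 :=
      ne_of_gt (lt_of_lt_of_le hA (hom x (Ioo_subset_Icc_self hx)))
    exact (Qf_hasDeriv k x hx').differentiableAt.differentiableWithinAt
  · rw [interior_Icc] at hx
    have hx' : om2 k x ≠ 0 :=
      ne_of_gt (lt_of_lt_of_le hA (hom x (Ioo_subset_Icc_self hx)))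
    rw [(Qf_hasDeriv k x hx').deriv]
    have hx0 : 0 < x := lt_of_le_of_lt hp hx.1
    positivity

lemma key (k : ℕ) (p L A : ℝ) (hp : 0 ≤ p) (hL : 0 < L) (hA : 0 < A)
    (hom : ∀ t ∈ Icc p (p+L), A ≤ om2 k t)
    (hIu : Integrable (fun x => (Hf k x)^2))
    (hhalf : ((k:ℝ)+1/2) / (A * Real.sqrt A) ≤ L/2) :
    Qf k p * (L/2) ≤ (1 + ((k:ℝ)+1/2)/A) * ∫ x, (Hf k x)^2 := by
  set b := p + L with hbdef
  have hb : p ≤ b := by simp [hbdef]; linarith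
  set B : ℝ := (k:ℝ) + 1/2 with hBdef
  have hB0 : 0 < B := by positivity
  have homB : ∀ t : ℝ, om2 k t ≤ B := by
    intro t; unfold om2; rw [hBdef]; nlinarith [sq_nonneg t]
  set Ik : ℝ := ∫ x, (Hf k x)^2 with hIkdef
  have hIk0 : 0 ≤ Ik := integral_nonneg (fun x => sq_nonneg _)
  have hpmem : p ∈ Icc p b := ⟨le_refl p, hb⟩
  have hbmem : b ∈ Icc p b := ⟨hb, le_refl b⟩
  have homp : A ≤ om2 k p := hom p hpmem
  have hom2p : 0 < om2 k p := lt_of_lt_of_le hA homp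
  set SA := Real.sqrt A with hSAdef
  have hSA0 : 0 < SA := Real.sqrt_pos.2 hA
  have hSA2 : SA^2 = A := Real.sq_sqrt hA.le
  -- continuity facts
  have hcontQ : ContinuousOn (Qf k) (Icc p b) := by
    refine ((Hf_cont k).pow 2).continuousOn.add
      (((Hg_cont k).pow 2).continuousOn.div (om2_cont k).continuousOn (fun t ht => ?_))
    exact ne_of_gt (lt_of_lt_of_le hA (hom t ht))
  have hQint : IntervalIntegrable (Qf k) volume p b := by
    apply ContinuousOn.intervalIntegrable
    rwa [uIcc_of_le hb]
  have hu2int : IntervalIntegrable (fun t => (Hf k t)^2) volume p b :=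
    (((Hf_cont k).pow 2)).intervalIntegrable p b
  have hv2int : IntervalIntegrable (fun t => (Hg k t)^2) volume p b :=
    (((Hg_cont k).pow 2)).intervalIntegrable p b
  have hv2dint : IntervalIntegrable (fun t => (Hg k t)^2 / om2 k t) volume p b := by
    apply ContinuousOn.intervalIntegrable
    rw [uIcc_of_le hb]
    refine ((Hg_cont k).pow 2).continuousOn.div (om2_cont k).continuousOn (fun t ht => ?_)
    exact ne_of_gt (lt_of_lt_of_le hA (hom t ht))
  have hQmono := Qf_monotone k p b A hp hA hom
  have hRanti := Rf_antitone k p b hp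
  -- step 1 : L * Qf k p ≤ ∫ t in p..b, Qf k t
  have step1 : L * Qf k p ≤ ∫ t in p..b, Qf k t := by
    have h1 : ∫ t in p..b, Qf k p = L * Qf k p := by
      rw [intervalIntegral.integral_const, smul_eq_mul, hbdef]
      ring_nf
    rw [← h1]
    exact intervalIntegral.integral_mono_on hb intervalIntegrable_const hQint
      (fun t ht => hQmono hpmem ht ht.1)
  -- step 2 : split Q integral
  have step2 : (∫ t in p..b, Qf k t)
      = (∫ t in p..b, (Hf k t)^2) + ∫ t in p..b, (Hg k t)^2 / om2 k t := by
    rw [← intervalIntegral.integral_add hu2int hv2dint]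
    exact intervalIntegral.integral_congr (fun t _ => rfl)
  -- step 3 : ∫ v²/om2 ≤ (1/A) ∫ v²
  have step3 : (∫ t in p..b, (Hg k t)^2 / om2 k t) ≤ (∫ t in p..b, (Hg k t)^2) / A := by
    rw [div_eq_mul_inv (∫ t in p..b, (Hg k t)^2), ← intervalIntegral.integral_mul_const]
    refine intervalIntegral.integral_mono_on hb hv2dint (hv2int.mul_const _) (fun t ht => ?_)
    rw [div_eq_mul_inv]
    have h1 : A ≤ om2 k t := hom t ht
    gcongr
  -- step 4 : FTC
  have step4 : (∫ t in p..b, ((Hg k t)^2 - om2 k t * (Hf k t)^2))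
      = Hf k b * Hg k b - Hf k p * Hg k p := by
    refine intervalIntegral.integral_eq_sub_of_hasDerivAt
      (f := fun t => Hf k t * Hg k t) (fun t _ => ?_) ?_
    · have h := (Hf_hasDeriv k t).mul (Hg_hasDeriv k t)
      refine h.congr_deriv ?_
      ring
    · apply Continuous.intervalIntegrable
      exact ((Hg_cont k).pow 2).sub ((om2_cont k).mul ((Hf_cont k).pow 2))
  -- step 5 : ∫_p^b u² ≤ Ik
  have step5 : (∫ t in p..b, (Hf k t)^2) ≤ Ik := by
    rw [intervalIntegral.integral_of_le hb]
    exact setIntegral_le_integral hIu (Eventually.of_forall (fun x => sq_nonneg _))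
  have hpb2 : (0:ℝ) ≤ ∫ t in p..b, (Hf k t)^2 := by
    rw [intervalIntegral.integral_of_le hb]
    exact setIntegral_nonneg measurableSet_Ioc (fun x _ => sq_nonneg _)
  -- step 6 : boundary bound
  have hbound : ∀ t ∈ Icc p b, |Hf k t * Hg k t| * (2 * SA) ≤ Rf k p := by
    intro t ht
    have hRt : Rf k t ≤ Rf k p := hRanti hpmem ht ht.1
    have homt : A ≤ om2 k t := hom t ht
    have h1 : A * (Hf k t)^2 + (Hg k t)^2 ≤ Rf k t := by
      unfold Rf
      nlinarith [sq_nonneg (Hf k t)]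
    have h2 : |Hf k t * Hg k t| * (2 * SA) ≤ A * (Hf k t)^2 + (Hg k t)^2 := by
      rw [abs_mul]
      nlinarith [sq_nonneg (SA * |Hf k t| - |Hg k t|), sq_abs (Hf k t), sq_abs (Hg k t),
        abs_nonneg (Hf k t), abs_nonneg (Hg k t), hSA2]
    linarith
  have step6 : Hf k b * Hg k b - Hf k p * Hg k p ≤ Rf k p / SA := by
    have h1 := hbound b hbmem
    have h2 := hbound p hpmem
    have h3 : Hf k b * Hg k b ≤ |Hf k b * Hg k b| := le_abs_self _
    have h4 : -(Hf k p * Hg k p) ≤ |Hf k p * Hg k p| := neg_le_abs _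
    have h5 : (Hf k b * Hg k b) * (2*SA) ≤ |Hf k b * Hg k b| * (2*SA) :=
      mul_le_mul_of_nonneg_right h3 (by positivity)
    have h6 : (-(Hf k p * Hg k p)) * (2*SA) ≤ |Hf k p * Hg k p| * (2*SA) :=
      mul_le_mul_of_nonneg_right h4 (by positivity)
    rw [le_div_iff₀ hSA0]
    linarith [h1, h2, h5, h6]
  -- step 7 : Rf k p = om2 k p * Qf k p ≤ B * Qf k p
  have hQp0 : 0 ≤ Qf k p := by
    unfold Qf
    positivity
  have hRQ : Rf k p = om2 k p * Qf k p := by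
    unfold Rf Qf
    have e : (Hg k p)^2 / om2 k p * om2 k p = (Hg k p)^2 :=
      div_mul_cancel₀ _ (ne_of_gt hom2p)
    linear_combination -e
  have step7 : Rf k p ≤ B * Qf k p := by
    rw [hRQ]
    exact mul_le_mul_of_nonneg_right (homB p) hQp0
  -- step 8 : ∫ v² ≤ boundary + B ∫ u²
  have step8 : (∫ t in p..b, (Hg k t)^2)
      ≤ Rf k p / SA + B * ∫ t in p..b, (Hf k t)^2 := by
    have hsubint : IntervalIntegrable (fun t => (Hg k t)^2 - om2 k t * (Hf k t)^2) volume p b :=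
      (((Hg_cont k).pow 2).sub ((om2_cont k).mul ((Hf_cont k).pow 2))).intervalIntegrable p b
    have hmulint : IntervalIntegrable (fun t => om2 k t * (Hf k t)^2) volume p b :=
      ((om2_cont k).mul ((Hf_cont k).pow 2)).intervalIntegrable p b
    have h1 : (∫ t in p..b, (Hg k t)^2)
        = (∫ t in p..b, ((Hg k t)^2 - om2 k t * (Hf k t)^2))
          + ∫ t in p..b, om2 k t * (Hf k t)^2 := by
      rw [← intervalIntegral.integral_add hsubint hmulint]
      exact intervalIntegral.integral_congr (fun t _ => by ring)
    have h2 : (∫ t in p..b, om2 k t * (Hf k t)^2) ≤ B * ∫ t in p..b, (Hf k t)^2 := by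
      rw [← intervalIntegral.integral_const_mul]
      refine intervalIntegral.integral_mono_on hb
        (((om2_cont k).mul ((Hf_cont k).pow 2)).intervalIntegrable p b)
        ((((Hf_cont k).pow 2).intervalIntegrable p b).const_mul _) (fun t _ => ?_)
      exact mul_le_mul_of_nonneg_right (homB t) (sq_nonneg _)
    rw [h1, step4]
    exact add_le_add step6 h2
  -- combine
  set J : ℝ := ∫ t in p..b, (Hf k t)^2 with hJdef
  set V : ℝ := ∫ t in p..b, (Hg k t)^2 with hVdef
  have c1 : V / A ≤ (Rf k p / SA + B * J) / A := by gcongr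
  have c2 : (Rf k p / SA + B * J) / A = Rf k p / SA / A + B * J / A := add_div _ _ _
  have c3 : Rf k p / SA / A ≤ B * Qf k p / SA / A := by gcongr
  have c4 : B * Qf k p / SA / A ≤ (L/2) * Qf k p := by
    have h1 : B * Qf k p / SA / A = (B / (A * SA)) * Qf k p := by
      rw [div_div, mul_comm SA A, mul_div_right_comm]
    rw [h1]
    exact mul_le_mul_of_nonneg_right hhalf hQp0
  have c5 : B * J / A ≤ B * Ik / A := by gcongr
  have c6 : L * Qf k p ≤ J + V / A := by
    have := step3
    linarith [step1, step2.le]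
  have expand : (1 + B/A) * Ik = Ik + B * Ik / A := by ring
  rw [expand]
  have := c1
  rw [c2] at this
  linarith

lemma poly_growth (P : Polynomial ℝ) :
    ∃ C : ℝ, 0 ≤ C ∧ ∀ x : ℝ, |P.eval x| ≤ C * Real.exp (x^2/8) := by
  set n := P.natDegree with hn
  set S := ∑ i ∈ Finset.range (n+1), |P.coeff i| with hS
  have hS0 : 0 ≤ S := Finset.sum_nonneg (fun i _ => abs_nonneg _)
  refine ⟨S * (n.factorial * 16^n * Real.exp (1/16)), by positivity, fun x => ?_⟩
  set m := max 1 |x| with hm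
  have hm1 : (1:ℝ) ≤ m := le_max_left _ _
  have hm0 : (0:ℝ) ≤ m := by linarith
  have hmx : |x| ≤ m := le_max_right _ _
  have h1 : |P.eval x| ≤ S * m^n := by
    rw [Polynomial.eval_eq_sum_range, hS, Finset.sum_mul]
    refine (Finset.abs_sum_le_sum_abs _ _).trans (Finset.sum_le_sum (fun i hi => ?_))
    rw [abs_mul, abs_pow]
    have hxi : |x|^i ≤ m^n :=
      (pow_le_pow_left₀ (abs_nonneg x) hmx i).trans
        (pow_le_pow_right₀ hm1 (Nat.lt_succ_iff.mp (Finset.mem_range.mp hi)))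
    exact mul_le_mul_of_nonneg_left hxi (abs_nonneg _)
  have h2 : m^n ≤ (n.factorial * 16^n) * Real.exp (m^2/16) := by
    have e1 : (m^2/16)^n / n.factorial ≤ Real.exp (m^2/16) := by
      have hnn : (0:ℝ) ≤ m^2/16 := by positivity
      refine le_trans ?_ (Real.sum_le_exp_of_nonneg hnn (n+1))
      exact Finset.single_le_sum (f := fun i => (m^2/16)^i / (i.factorial : ℝ))
        (fun i _ => by positivity) (Finset.self_mem_range_succ n)
    have e2 : m^n ≤ (m^2)^n := by
      rw [← pow_mul]
      exact pow_le_pow_right₀ hm1 (by omega)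
    have e3 : (m^2/16)^n = (m^2)^n / 16^n := div_pow _ _ _
    rw [e3] at e1
    have hf0 : (0:ℝ) < n.factorial := by positivity
    have h16 : (0:ℝ) < 16^n := by positivity
    calc m^n ≤ (m^2)^n := e2
    _ ≤ (n.factorial * 16^n) * Real.exp (m^2/16) := by
        rw [div_div] at e1
        have := (div_le_iff₀ (by positivity)).1 e1
        linarith [this]
  have h3 : Real.exp (m^2/16) ≤ Real.exp (1/16) * Real.exp (x^2/8) := by
    rw [← Real.exp_add]
    apply Real.exp_le_exp.2
    have hmm : m^2 ≤ 1 + x^2 := by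
      rcases max_cases 1 |x| with ⟨he, _⟩ | ⟨he, _⟩ <;> rw [← hm] at he <;>
        nlinarith [sq_abs x, sq_nonneg x]
    nlinarith [sq_nonneg x]
  calc |P.eval x| ≤ S * m^n := h1
  _ ≤ S * ((n.factorial * 16^n) * Real.exp (m^2/16)) := by
      apply mul_le_mul_of_nonneg_left h2 hS0
  _ ≤ S * ((n.factorial * 16^n) * (Real.exp (1/16) * Real.exp (x^2/8))) := by
      have hfn : (0:ℝ) ≤ (n.factorial * 16^n : ℝ) := by positivity
      exact mul_le_mul_of_nonneg_left (mul_le_mul_of_nonneg_left h3 hfn) hS0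
  _ = S * (n.factorial * 16^n * Real.exp (1/16)) * Real.exp (x^2/8) := by ring

lemma aeval_growth (q : Polynomial ℤ) :
    ∃ C : ℝ, 0 ≤ C ∧ ∀ x : ℝ, |(Polynomial.aeval x q : ℝ)| ≤ C * Real.exp (x^2/8) := by
  obtain ⟨C, hC0, hC⟩ := poly_growth (q.map (algebraMap ℤ ℝ))
  refine ⟨C, hC0, fun x => ?_⟩
  have := hC x
  rwa [Polynomial.eval_map, ← Polynomial.aeval_def] at this

lemma aeval_gauss_integrable (q : Polynomial ℤ) :
    Integrable (fun x : ℝ => (Polynomial.aeval x q : ℝ) * Real.exp (-x^2/2)) := by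
  obtain ⟨C, hC0, hC⟩ := aeval_growth q
  have hcont : Continuous (fun x : ℝ => (Polynomial.aeval x q : ℝ) * Real.exp (-x^2/2)) := by
    have h1 : Continuous (fun x : ℝ => (Polynomial.aeval x q : ℝ)) :=
      Polynomial.continuous_aeval q
    exact h1.mul (Real.continuous_exp.comp (by continuity))
  refine Integrable.mono' ((integrable_exp_neg_mul_sq (by norm_num : (0:ℝ) < 3/8)).const_mul C)
    hcont.aestronglyMeasurable (Eventually.of_forall (fun x => ?_))
  rw [norm_mul, Real.norm_eq_abs, Real.norm_eq_abs, abs_exp]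
  calc |(Polynomial.aeval x q : ℝ)| * Real.exp (-x^2/2)
      ≤ (C * Real.exp (x^2/8)) * Real.exp (-x^2/2) :=
        mul_le_mul_of_nonneg_right (hC x) (Real.exp_nonneg _)
  _ = C * Real.exp (-(3/8) * x^2) := by
      rw [mul_assoc, ← Real.exp_add]
      congr 2
      ring

lemma aeval_gauss_tendsto_atTop (q : Polynomial ℤ) :
    Tendsto (fun x : ℝ => (Polynomial.aeval x q : ℝ) * Real.exp (-x^2/2)) atTop (𝓝 0) := by
  obtain ⟨C, hC0, hC⟩ := aeval_growth q
  have hb : ∀ x : ℝ, ‖(Polynomial.aeval x q : ℝ) * Real.exp (-x^2/2)‖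
      ≤ C * Real.exp (-(3/8) * x^2) := by
    intro x
    rw [norm_mul, Real.norm_eq_abs, Real.norm_eq_abs, abs_exp]
    calc |(Polynomial.aeval x q : ℝ)| * Real.exp (-x^2/2)
        ≤ (C * Real.exp (x^2/8)) * Real.exp (-x^2/2) :=
          mul_le_mul_of_nonneg_right (hC x) (Real.exp_nonneg _)
    _ = C * Real.exp (-(3/8) * x^2) := by
        rw [mul_assoc, ← Real.exp_add]; congr 2; ring
  have hexp : Tendsto (fun x : ℝ => C * Real.exp (-(3/8) * x^2)) atTop (𝓝 0) := by
    rw [show (0:ℝ) = C * 0 by ring]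
    refine Tendsto.const_mul C (Real.tendsto_exp_atBot.comp ?_)
    have h2 : Tendsto (fun x : ℝ => x^2) atTop atTop := tendsto_pow_atTop (by norm_num)
    exact Tendsto.const_mul_atTop_of_neg (by norm_num : (-(3/8) : ℝ) < 0) h2
  exact squeeze_zero_norm hb hexp

lemma aeval_gauss_tendsto_atBot (q : Polynomial ℤ) :
    Tendsto (fun x : ℝ => (Polynomial.aeval x q : ℝ) * Real.exp (-x^2/2)) atBot (𝓝 0) := by
  obtain ⟨C, hC0, hC⟩ := aeval_growth q
  have hb : ∀ x : ℝ, ‖(Polynomial.aeval x q : ℝ) * Real.exp (-x^2/2)‖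
      ≤ C * Real.exp (-(3/8) * x^2) := by
    intro x
    rw [norm_mul, Real.norm_eq_abs, Real.norm_eq_abs, abs_exp]
    calc |(Polynomial.aeval x q : ℝ)| * Real.exp (-x^2/2)
        ≤ (C * Real.exp (x^2/8)) * Real.exp (-x^2/2) :=
          mul_le_mul_of_nonneg_right (hC x) (Real.exp_nonneg _)
    _ = C * Real.exp (-(3/8) * x^2) := by
        rw [mul_assoc, ← Real.exp_add]; congr 2; ring
  have hexp : Tendsto (fun x : ℝ => C * Real.exp (-(3/8) * x^2)) atBot (𝓝 0) := by
    rw [show (0:ℝ) = C * 0 by ring]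
    refine Tendsto.const_mul C (Real.tendsto_exp_atBot.comp ?_)
    have h2 : Tendsto (fun x : ℝ => x^2) atBot atTop := by
      have h3 : Tendsto (fun x : ℝ => -x) atBot atTop := tendsto_neg_atBot_atTop
      have h4 := (tendsto_pow_atTop (n := 2) (by norm_num)).comp h3
      have h5 : ((fun x : ℝ => x ^ 2) ∘ fun x : ℝ => -x) = fun x : ℝ => x^2 := by
        funext y
        simp [Function.comp, neg_pow]
      rwa [h5] at h4
    exact Tendsto.const_mul_atTop_of_neg (by norm_num : (-(3/8) : ℝ) < 0) h2
  exact squeeze_zero_norm hb hexp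

lemma gauss2_hasDeriv (x : ℝ) :
    HasDerivAt (fun y : ℝ => Real.exp (-y^2/2)) (-x * Real.exp (-x^2/2)) x := by
  have h : HasDerivAt (fun y : ℝ => -y^2/2) (-x) x := by
    have := ((hasDerivAt_pow 2 x).neg).div_const 2
    refine this.congr_deriv ?_
    norm_num
    ring
  have h2 := (Real.hasDerivAt_exp (-x^2/2)).comp x h
  exact h2.congr_deriv (mul_comm _ _)

lemma hermite_norm (k : ℕ) :
    ∫ x : ℝ, (Polynomial.aeval x (Polynomial.hermite k) : ℝ)^2 * Real.exp (-x^2/2)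
      = Real.sqrt (2*Real.pi) * (Nat.factorial k) := by
  induction k with
  | zero =>
      simp only [Polynomial.hermite_zero, map_one, one_pow, one_mul, Nat.factorial_zero,
        Nat.cast_one, mul_one]
      have : ∀ x : ℝ, Real.exp (-x^2/2) = Real.exp (-(1/2) * x^2) := by
        intro x; congr 1; ring
      rw [funext this, integral_gaussian]
      congr 1
      ring
  | succ k ih =>
      -- F x = He_{k+1}(x) * (He_k(x) e^{-x²/2})
      set F : ℝ → ℝ := fun x =>
        (Polynomial.aeval x (Polynomial.hermite (k+1)) : ℝ)
          * ((Polynomial.aeval x (Polynomial.hermite k) : ℝ) * Real.exp (-x^2/2)) with hF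
      set F' : ℝ → ℝ := fun x =>
        ((k:ℝ)+1) * ((Polynomial.aeval x (Polynomial.hermite k) : ℝ)^2 * Real.exp (-x^2/2))
          - (Polynomial.aeval x (Polynomial.hermite (k+1)) : ℝ)^2 * Real.exp (-x^2/2) with hF'
      have hderiv : ∀ x : ℝ, HasDerivAt F (F' x) x := by
        intro x
        have hA : HasDerivAt (fun y : ℝ => (Polynomial.aeval y (Polynomial.hermite (k+1)) : ℝ))
            (((k:ℝ)+1) * (Polynomial.aeval x (Polynomial.hermite k) : ℝ)) x := by
          have h := (Polynomial.hermite (k+1)).hasDerivAt_aeval (𝕜 := ℝ) x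
          rw [hermite_derivative] at h
          simp only [map_mul, Polynomial.aeval_C] at h
          refine h.congr_deriv ?_
          push_cast
          ring
        have hG : HasDerivAt (fun y : ℝ =>
            (Polynomial.aeval y (Polynomial.hermite k) : ℝ) * Real.exp (-y^2/2))
            (-(Polynomial.aeval x (Polynomial.hermite (k+1)) : ℝ) * Real.exp (-x^2/2)) x := by
          have h := ((Polynomial.hermite k).hasDerivAt_aeval (𝕜 := ℝ) x).mul (gauss2_hasDeriv x)
          refine h.congr_deriv ?_
          have hs : (Polynomial.aeval x (Polynomial.hermite (k+1)) : ℝ)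
              = x * (Polynomial.aeval x (Polynomial.hermite k) : ℝ)
                - (Polynomial.aeval x (Polynomial.derivative (Polynomial.hermite k)) : ℝ) := by
            rw [hermite_succ]
            simp only [map_sub, map_mul, Polynomial.aeval_X]
          rw [hs]
          ring
        have h := hA.mul hG
        refine h.congr_deriv ?_
        rw [hF']
        have hs : (Polynomial.aeval x (Polynomial.hermite (k+1)) : ℝ)
            = x * (Polynomial.aeval x (Polynomial.hermite k) : ℝ)
              - (Polynomial.aeval x (Polynomial.derivative (Polynomial.hermite k)) : ℝ) := by
          rw [hermite_succ]
          simp only [map_sub, map_mul, Polynomial.aeval_X]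
        ring
      have hint1 : Integrable (fun x : ℝ =>
          (Polynomial.aeval x (Polynomial.hermite k) : ℝ)^2 * Real.exp (-x^2/2)) := by
        have := aeval_gauss_integrable ((Polynomial.hermite k)^2)
        simpa [map_pow] using this
      have hint2 : Integrable (fun x : ℝ =>
          (Polynomial.aeval x (Polynomial.hermite (k+1)) : ℝ)^2 * Real.exp (-x^2/2)) := by
        have := aeval_gauss_integrable ((Polynomial.hermite (k+1))^2)
        simpa [map_pow] using this
      have hintF' : Integrable F' := ((hint1.const_mul _).sub hint2)
      have htop : Tendsto F atTop (𝓝 0) := by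
        have := aeval_gauss_tendsto_atTop ((Polynomial.hermite (k+1)) * (Polynomial.hermite k))
        simp only [map_mul] at this
        refine this.congr (fun x => ?_)
        rw [hF]
        ring
      have hbot : Tendsto F atBot (𝓝 0) := by
        have := aeval_gauss_tendsto_atBot ((Polynomial.hermite (k+1)) * (Polynomial.hermite k))
        simp only [map_mul] at this
        refine this.congr (fun x => ?_)
        rw [hF]
        ring
      have hzero : ∫ x : ℝ, F' x = 0 := by
        rw [MeasureTheory.integral_of_hasDerivAt_of_tendsto hderiv hintF' hbot htop]
        ring
      rw [hF'] at hzero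
      rw [integral_sub (hint1.const_mul _) hint2, MeasureTheory.integral_const_mul, ih] at hzero
      have : (∫ x : ℝ, (Polynomial.aeval x (Polynomial.hermite (k+1)) : ℝ)^2 * Real.exp (-x^2/2))
          = ((k:ℝ)+1) * (Real.sqrt (2*Real.pi) * (Nat.factorial k)) := by linarith
      rw [this, Nat.factorial_succ]
      push_cast
      ring

lemma Hf_sq (k : ℕ) (x : ℝ) :
    (Hf k x)^2 = (Polynomial.aeval x ((Polynomial.hermite k)^2) : ℝ) * Real.exp (-x^2/2) := by
  unfold Hf
  rw [map_pow, mul_pow, sq (Real.exp (-x^2/4)), ← Real.exp_add]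
  congr 2
  ring

lemma Hf_sq_integrable (k : ℕ) : Integrable (fun x : ℝ => (Hf k x)^2) := by
  have := aeval_gauss_integrable ((Polynomial.hermite k)^2)
  exact this.congr (Eventually.of_forall (fun x => (Hf_sq k x).symm))

lemma Hf_sq_integral (k : ℕ) :
    ∫ x : ℝ, (Hf k x)^2 = Real.sqrt (2*Real.pi) * (Nat.factorial k) := by
  rw [← hermite_norm k]
  refine integral_congr_ae (Eventually.of_forall (fun x => ?_))
  show (Hf k x)^2 = _
  rw [Hf_sq, map_pow]

lemma Hf_bound (k : ℕ) : ∃ M : ℝ, 0 ≤ M ∧ ∀ x : ℝ, |Hf k x| ≤ M := by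
  obtain ⟨C, hC0, hC⟩ := aeval_growth (Polynomial.hermite k)
  refine ⟨C, hC0, fun x => ?_⟩
  unfold Hf
  rw [abs_mul, abs_exp]
  calc |(Polynomial.aeval x (Polynomial.hermite k) : ℝ)| * Real.exp (-x^2/4)
      ≤ (C * Real.exp (x^2/8)) * Real.exp (-x^2/4) :=
        mul_le_mul_of_nonneg_right (hC x) (Real.exp_nonneg _)
  _ = C * Real.exp (-x^2/8) := by rw [mul_assoc, ← Real.exp_add]; congr 2; ring
  _ ≤ C * 1 := mul_le_mul_of_nonneg_left
      (Real.exp_le_one_iff.2 (by nlinarith [sq_nonneg x])) hC0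
  _ = C := mul_one C

lemma Hf_abs_neg (k : ℕ) (x : ℝ) : |Hf k (-x)| = |Hf k x| := by
  unfold Hf
  rw [hermite_aeval_neg]
  rw [abs_mul, abs_mul, abs_mul, abs_pow, abs_neg, abs_one, one_pow, one_mul]
  congr 2
  ring

lemma hermiteFun_abs (k : ℕ) (x : ℝ) :
    |hermiteFun k x| = |Hf k x| / Real.sqrt (Real.sqrt (2 * Real.pi) * (Nat.factorial k)) := by
  unfold hermiteFun Hf
  rw [abs_div, abs_of_nonneg (Real.sqrt_nonneg _)]

lemma hermiteFun_abs_neg (k : ℕ) (x : ℝ) : |hermiteFun k (-x)| = |hermiteFun k x| := by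
  rw [hermiteFun_abs, hermiteFun_abs, Hf_abs_neg]

lemma hermiteFun_sq (k : ℕ) (x : ℝ) :
    (hermiteFun k x)^2 = (Hf k x)^2 / (Real.sqrt (2 * Real.pi) * (Nat.factorial k)) := by
  unfold hermiteFun Hf
  rw [div_pow, Real.sq_sqrt (by positivity)]

lemma hermiteFun_bounded (k : ℕ) : ∃ M : ℝ, 0 ≤ M ∧ ∀ x : ℝ, |hermiteFun k x| ≤ M := by
  obtain ⟨M, hM0, hM⟩ := Hf_bound k
  refine ⟨M / Real.sqrt (Real.sqrt (2 * Real.pi) * (Nat.factorial k)), by positivity, fun x => ?_⟩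
  rw [hermiteFun_abs]
  gcongr
  exact hM x

lemma rpow_quarter (k : ℕ) (hk : 0 < k) :
    (k:ℝ) ^ (-(1/4 : ℝ)) = (Real.sqrt (Real.sqrt k))⁻¹ := by
  have hk0 : (0:ℝ) < k := by exact_mod_cast hk
  rw [Real.rpow_neg hk0.le]
  congr 1
  rw [Real.sqrt_eq_rpow, Real.sqrt_eq_rpow, ← Real.rpow_mul hk0.le]
  norm_num

lemma rpow_quarter_pos (k : ℕ) (hk : 0 < k) : 0 < (k:ℝ) ^ (-(1/4 : ℝ)) := by
  have hk0 : (0:ℝ) < k := by exact_mod_cast hk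
  positivity


private lemma arith0 (sx kx : ℝ) (h2 : sx^2 = kx) (hkx : 1 ≤ kx) (h0 : 0 < sx) : 1 ≤ sx := by
  nlinarith

private lemma arith1 (u Nx kx : ℝ) (h0 : 0 < u) (h1 : u < 1) (hN0 : 0 ≤ Nx)
    (hkN : (1 - u/10) * Nx ≤ kx) : Nx ≤ (1 + u/10)^2 * kx := by
  nlinarith [mul_nonneg hN0 h0.le, mul_nonneg (mul_nonneg hN0 h0.le) h0.le]

private lemma arith2 (u sNx skx : ℝ) (h0 : 0 < u) (h1 : u < 1)
    (h3 : (2 - u) * sNx ≤ (2 - u) * ((1 + u/10) * skx)) :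
    (2 - u) * sNx + u * skx / 8 ≤ ((2 - u) * (1 + u/10) + u/8) * skx := by
  nlinarith

private lemma arith_t4 (t r M : ℝ) (h1 : t ≤ r) (h2 : 0 ≤ t) (h3 : r^2 ≤ M) : t^2 ≤ M := by
  nlinarith

private lemma arith3 (u kx t2 : ℝ) (h0 : 0 < u) (h1 : u < 1) (hk : 1 ≤ kx)
    (ht : t2 ≤ (4 - u) * kx) : u * kx / 4 ≤ kx + 1/2 - t2/4 := by
  nlinarith

private lemma arith4 (w kx : ℝ) (h : 128 ≤ w) (hk : 1 ≤ kx) : kx + 1/2 ≤ w * kx / 64 := by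
  nlinarith

private lemma arith5 (u kx : ℝ) (hk : 1 ≤ kx) (h0 : 0 < u) : (kx + 1/2) * u ≤ 6 * (u * kx / 4) := by
  nlinarith

private lemma arith6 (q sx u : ℝ) (h : q * (u^2 * sx) ≤ 112) : q * sx * u^2 ≤ 121 := by
  nlinarith

private lemma arith_sqrt_cmp (a c : ℝ) (ha : 0 ≤ a) (hc : 0 < c) (h : a^2 ≤ c^2) : a ≤ c := by
  nlinarith

private lemma arith_t1 (u : ℝ) (h0 : 0 < u) (h1 : u < 1) :
    ((2 - u) * (1 + u/10) + u/8)^2 ≤ 4 - u := by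
  nlinarith [h0, h1, sq_nonneg u, mul_nonneg h0.le h0.le,
    mul_nonneg (mul_nonneg h0.le h0.le) h0.le,
    mul_nonneg h0.le (sub_nonneg.2 h1.le),
    mul_nonneg (mul_nonneg h0.le h0.le) (sub_nonneg.2 h1.le)]

private lemma arith_t2 (u kx : ℝ) (h0 : 0 < u) (h1 : u < 1) (hk : 256 ≤ u^3*kx) : 256 ≤ u^2*kx := by
  nlinarith

private lemma arith_t3 (u kx : ℝ) (h0 : 0 < u) (h1 : u < 1) (hk : 256 ≤ u^3*kx)
    (h4 : 256 ≤ u^2*kx) : (256:ℝ)^2 ≤ u^5*kx^2 := by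
  nlinarith [hk, h4]

private lemma arith_t4' (u skx SAx kx Ax : ℝ) (h0 : 0 < u) (hsk0 : 0 < skx) (hSA0 : 0 < SAx)
    (h1 : (u^2 * skx * SAx)^2 = u^4 * kx * Ax) (h2 : u^4 * kx * Ax = u^5 * kx^2 / 4)
    (h3 : (256:ℝ)^2 ≤ u^5 * kx^2) : 128 ≤ u^2 * skx * SAx := by
  nlinarith [mul_pos (mul_pos (mul_pos h0 h0) hsk0) hSA0]

/-- Uniform decay of Hermite functions in the bulk. -/
theorem hermite_function_bulk_bound (Υ : ℝ) (hΥ : Υ ∈ Set.Ioo (0 : ℝ) 1) :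
    ∃ C : ℝ, 0 < C ∧ ∀ k N : ℕ, 0 < k → 0 < N →
      (1 - Υ / 10) * (N : ℝ) ≤ (k : ℝ) →
      ∀ x ∈ Set.Icc (-2 + Υ) (2 - Υ),
        |hermiteFun k (x * Real.sqrt N)| ≤ C * (k : ℝ) ^ (-(1 / 4 : ℝ)) := by
  obtain ⟨hΥ0, hΥ1⟩ := hΥ
  have hM : ∀ j : ℕ, ∃ M : ℝ, 0 ≤ M ∧ ∀ y : ℝ, |hermiteFun j y| ≤ M := hermiteFun_bounded
  obtain ⟨Mf, hMf⟩ : ∃ Mf : ℕ → ℝ, ∀ j, 0 ≤ Mf j ∧ ∀ y : ℝ, |hermiteFun j y| ≤ Mf j := by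
    refine ⟨fun j => (hM j).choose, fun j => (hM j).choose_spec⟩
  obtain ⟨G, hGdef⟩ : ∃ G : ℕ → ℝ, ∀ j, G j = Mf j * (j:ℝ) ^ ((1/4 : ℝ)) :=
    ⟨_, fun j => rfl⟩
  have hG0 : ∀ j, 0 ≤ G j := fun j => by
    rw [hGdef]
    exact mul_nonneg (hMf j).1 (Real.rpow_nonneg (Nat.cast_nonneg j) _)
  obtain ⟨Knat, hKnat⟩ : ∃ K : ℕ, K = ⌈(256:ℝ)/Υ^3⌉₊ := ⟨_, rfl⟩
  obtain ⟨Csmall, hCsmall⟩ : ∃ c : ℝ, c = (∑ j ∈ Finset.range (Knat+1), G j) + 1 := ⟨_, rfl⟩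
  have hCsmall1 : 1 ≤ Csmall := by
    rw [hCsmall]
    have : 0 ≤ ∑ j ∈ Finset.range (Knat+1), G j := Finset.sum_nonneg (fun j _ => hG0 j)
    linarith
  have hGle : ∀ j ≤ Knat, G j ≤ Csmall := by
    intro j hj
    rw [hCsmall]
    have h1 : G j ≤ ∑ i ∈ Finset.range (Knat+1), G i :=
      Finset.single_le_sum (fun i _ => hG0 i) (Finset.mem_range.2 (by omega))
    linarith
  obtain ⟨Cmain, hCmain⟩ : ∃ c : ℝ, c = 11/Υ := ⟨_, rfl⟩
  have hCmain0 : 0 < Cmain := by rw [hCmain]; positivity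
  refine ⟨Csmall + Cmain, by linarith, fun k N hk hN hkN x hx => ?_⟩
  have hk1 : (1:ℝ) ≤ k := by exact_mod_cast hk
  have hk0 : (0:ℝ) < k := by linarith
  have hr4 : 0 < (k:ℝ) ^ (-(1/4 : ℝ)) := rpow_quarter_pos k hk
  obtain ⟨p, hpdef⟩ : ∃ q : ℝ, q = |x| * Real.sqrt N := ⟨_, rfl⟩
  have hp0 : 0 ≤ p := hpdef ▸ mul_nonneg (abs_nonneg x) (Real.sqrt_nonneg _)
  have habs : |hermiteFun k (x * Real.sqrt N)| = |hermiteFun k p| := by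
    rcases le_or_gt 0 x with hx0 | hx0
    · rw [hpdef, abs_of_nonneg hx0]
    · rw [hpdef, abs_of_neg hx0]
      have h1 : x * Real.sqrt N = -(-x * Real.sqrt N) := by ring
      rw [h1, hermiteFun_abs_neg]
  rw [habs]
  have hxb : |x| ≤ 2 - Υ := by
    rw [abs_le]
    exact ⟨by linarith [hx.1], hx.2⟩
  have hsN0 : 0 ≤ Real.sqrt N := Real.sqrt_nonneg _
  have hpb : p ≤ (2 - Υ) * Real.sqrt N := by
    rw [hpdef]
    exact mul_le_mul_of_nonneg_right hxb hsN0
  rcases le_or_gt ((256:ℝ)/Υ^3) k with hbig | hsmall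
  · -- ===== main case =====
    obtain ⟨sk, hsk⟩ : ∃ s : ℝ, s = Real.sqrt k := ⟨_, rfl⟩
    have hsk0 : 0 < sk := hsk ▸ Real.sqrt_pos.2 hk0
    have hsk2 : sk^2 = k := hsk ▸ Real.sq_sqrt hk0.le
    have hsk1 : 1 ≤ sk := arith0 sk k hsk2 hk1 hsk0
    obtain ⟨sN, hsN⟩ : ∃ s : ℝ, s = Real.sqrt N := ⟨_, rfl⟩
    have hsN0' : 0 ≤ sN := hsN ▸ Real.sqrt_nonneg _
    have hsN2 : sN^2 = N := hsN ▸ Real.sq_sqrt (Nat.cast_nonneg N)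
    have hpb' : p ≤ (2 - Υ) * sN := by rw [hsN]; exact hpb
    have hsNle : sN ≤ (1 + Υ/10) * sk := by
      have h1 : (N:ℝ) ≤ ((1 + Υ/10) * sk)^2 := by
        rw [mul_pow, hsk2]
        exact arith1 Υ N k hΥ0 hΥ1 (Nat.cast_nonneg N) hkN
      calc sN = Real.sqrt N := hsN
      _ ≤ Real.sqrt (((1 + Υ/10) * sk)^2) := Real.sqrt_le_sqrt h1
      _ = (1 + Υ/10) * sk := Real.sqrt_sq (by positivity)
    obtain ⟨L, hL⟩ : ∃ l : ℝ, l = Υ * sk / 8 := ⟨_, rfl⟩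
    have hL0 : 0 < L := by rw [hL]; positivity
    obtain ⟨A, hA⟩ : ∃ a : ℝ, a = Υ * k / 4 := ⟨_, rfl⟩
    have hA0 : 0 < A := by rw [hA]; positivity
    have hkbig : 256 ≤ Υ^3 * k := by
      rw [div_le_iff₀ (by positivity : (0:ℝ) < Υ^3)] at hbig
      linarith
    have hom : ∀ t ∈ Icc p (p + L), A ≤ om2 k t := by
      intro t ht
      have ht0 : 0 ≤ t := le_trans hp0 ht.1
      have ht1 : t ≤ (2 - Υ) * sN + Υ * sk / 8 := by
        have h2 := ht.2
        rw [hL] at h2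
        linarith
      have hscal : ((2 - Υ) * (1 + Υ/10) + Υ/8)^2 ≤ 4 - Υ := arith_t1 Υ hΥ0 hΥ1
      have hc : (2 - Υ) * sN + Υ * sk / 8 ≤ ((2 - Υ) * (1 + Υ/10) + Υ/8) * sk :=
        arith2 Υ sN sk hΥ0 hΥ1
          (mul_le_mul_of_nonneg_left hsNle (by linarith : (0:ℝ) ≤ 2 - Υ))
      have ht3 : t ≤ ((2 - Υ) * (1 + Υ/10) + Υ/8) * sk := le_trans ht1 hc
      have hcsq : (((2 - Υ) * (1 + Υ/10) + Υ/8) * sk)^2 ≤ (4 - Υ) * k := by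
        rw [mul_pow, ← hsk2]
        exact mul_le_mul_of_nonneg_right hscal (sq_nonneg sk)
      have ht4 : t^2 ≤ (4 - Υ) * k := arith_t4 t _ _ ht3 ht0 hcsq
      unfold om2
      rw [hA]
      exact arith3 Υ k (t^2) hΥ0 hΥ1 hk1 ht4
    have hhalf : ((k:ℝ) + 1/2) / (A * Real.sqrt A) ≤ L / 2 := by
      obtain ⟨SA, hSA⟩ : ∃ s : ℝ, s = Real.sqrt A := ⟨_, rfl⟩
      have hSA0 : 0 < SA := hSA ▸ Real.sqrt_pos.2 hA0
      have hSA2 : SA^2 = A := hSA ▸ Real.sq_sqrt hA0.le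
      rw [← hSA, div_le_iff₀ (by positivity : (0:ℝ) < A * SA)]
      have hnum : 128 ≤ Υ^2 * sk * SA := by
        have h1 : (Υ^2 * sk * SA)^2 = Υ^4 * k * A := by
          rw [mul_pow, mul_pow, hsk2, hSA2]
          ring
        have h2 : Υ^4 * k * A = Υ^5 * k^2 / 4 := by rw [hA]; ring
        have h4 : 256 ≤ Υ^2 * k := arith_t2 Υ k hΥ0 hΥ1 hkbig
        have h3 : (256:ℝ)^2 ≤ Υ^5 * k^2 := arith_t3 Υ k hΥ0 hΥ1 hkbig h4
        exact arith_t4' Υ sk SA k A hΥ0 hsk0 hSA0 h1 h2 h3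
      have hLAS : L / 2 * (A * SA) = (Υ^2 * sk * SA) * k / 64 := by
        rw [hL, hA]
        ring
      rw [hLAS]
      have h5 := mul_le_mul_of_nonneg_right hnum hk0.le
      have h6 := arith4 (Υ^2 * sk * SA) k hnum hk1
      linarith
    have hkey := key k p L A hp0 hL0 hA0 hom (Hf_sq_integrable k) hhalf
    rw [Hf_sq_integral k] at hkey
    obtain ⟨D, hD⟩ : ∃ d : ℝ, d = Real.sqrt (2 * Real.pi) * (Nat.factorial k) := ⟨_, rfl⟩
    have hD0 : 0 < D := by
      rw [hD]
      have h1 : (0:ℝ) < Real.sqrt (2 * Real.pi) := Real.sqrt_pos.2 (by positivity)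
      have h2 : (0:ℝ) < (Nat.factorial k : ℝ) := by exact_mod_cast Nat.factorial_pos k
      positivity
    rw [← hD] at hkey
    have hup : (Hf k p)^2 ≤ Qf k p := by
      unfold Qf
      have hom2p : 0 < om2 k p := lt_of_lt_of_le hA0 (hom p ⟨le_refl p, by linarith⟩)
      have h1 : 0 ≤ (Hg k p)^2 / om2 k p := by positivity
      linarith
    have hpsisq : (hermiteFun k p)^2 = (Hf k p)^2 / D := by
      rw [hD]
      exact hermiteFun_sq k p
    have hBA : 1 + ((k:ℝ) + 1/2) / A ≤ 7 / Υ := by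
      have h1 : ((k:ℝ) + 1/2) / A ≤ 6 / Υ := by
        rw [hA, div_le_div_iff₀ (by positivity) hΥ0]
        exact arith5 Υ k hk1 hΥ0
      have h2 : (1:ℝ) ≤ 1 / Υ := by
        rw [le_div_iff₀ hΥ0]
        linarith
      have h3 : 6 / Υ + 1 / Υ = 7 / Υ := by ring
      linarith
    have e1 : (hermiteFun k p)^2 * (L/2) ≤ 1 + ((k:ℝ) + 1/2) / A := by
      rw [hpsisq, div_mul_eq_mul_div, div_le_iff₀ hD0]
      calc (Hf k p)^2 * (L/2) ≤ Qf k p * (L/2) :=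
        mul_le_mul_of_nonneg_right hup (by positivity)
      _ ≤ (1 + ((k:ℝ) + 1/2) / A) * D := hkey
    have e2 : (hermiteFun k p)^2 * (L/2) ≤ 7 / Υ := le_trans e1 hBA
    have e3 : (hermiteFun k p)^2 * (Υ^2 * sk) ≤ 112 := by
      have h16 : Υ^2 * sk = (L/2) * (16*Υ) := by rw [hL]; ring
      rw [h16, ← mul_assoc]
      calc (hermiteFun k p)^2 * (L/2) * (16*Υ) ≤ (7/Υ) * (16*Υ) :=
        mul_le_mul_of_nonneg_right e2 (by positivity)
      _ = 112 := by
          field_simp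
          ring
    -- conclude
    rw [rpow_quarter k hk]
    obtain ⟨ssk, hssk⟩ : ∃ s : ℝ, s = Real.sqrt sk := ⟨_, rfl⟩
    have hssk0 : 0 < ssk := hssk ▸ Real.sqrt_pos.2 hsk0
    have hssk2 : ssk^2 = sk := hssk ▸ Real.sq_sqrt hsk0.le
    have hss : Real.sqrt (Real.sqrt k) = ssk := by rw [hssk, hsk]
    rw [hss]
    have key2 : |hermiteFun k p| * ssk ≤ 11/Υ := by
      have hsq : (|hermiteFun k p| * ssk)^2 ≤ (11/Υ)^2 := by
        rw [mul_pow, sq_abs, hssk2, div_pow]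
        rw [le_div_iff₀ (by positivity : (0:ℝ) < Υ^2)]
        exact le_trans (arith6 ((hermiteFun k p)^2) sk Υ e3) (by norm_num)
      exact arith_sqrt_cmp _ _ (mul_nonneg (abs_nonneg (hermiteFun k p)) hssk0.le)
        (div_pos (by norm_num : (0:ℝ) < 11) hΥ0) hsq
    have key3 : |hermiteFun k p| ≤ (11/Υ) * ssk⁻¹ := by
      rw [← div_eq_mul_inv, le_div_iff₀ hssk0]
      exact key2
    calc |hermiteFun k p| ≤ (11/Υ) * ssk⁻¹ := key3
    _ = Cmain * ssk⁻¹ := by rw [hCmain]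
    _ ≤ (Csmall + Cmain) * ssk⁻¹ :=
        mul_le_mul_of_nonneg_right (by linarith) (by positivity)
  · -- ===== small case =====
    have hkK : k ≤ Knat := by
      have h1 : (256:ℝ)/Υ^3 ≤ (Knat : ℝ) := by rw [hKnat]; exact Nat.le_ceil _
      have h2 : (k:ℝ) < (Knat:ℝ) := lt_of_lt_of_le hsmall h1
      exact_mod_cast h2.le
    have h1 : |hermiteFun k p| ≤ Mf k := (hMf k).2 p
    have h2 : Mf k = G k * (k:ℝ) ^ (-(1/4 : ℝ)) := by
      rw [hGdef, mul_assoc, ← Real.rpow_add hk0]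
      norm_num
    have h3 : G k * (k:ℝ) ^ (-(1/4 : ℝ)) ≤ Csmall * (k:ℝ) ^ (-(1/4 : ℝ)) :=
      mul_le_mul_of_nonneg_right (hGle k hkK) hr4.le
    have h4 : Csmall * (k:ℝ) ^ (-(1/4 : ℝ)) ≤ (Csmall + Cmain) * (k:ℝ) ^ (-(1/4 : ℝ)) :=
      mul_le_mul_of_nonneg_right (by linarith) hr4.le
    calc |hermiteFun k p| ≤ Mf k := h1
    _ = G k * (k:ℝ) ^ (-(1/4 : ℝ)) := h2
    _ ≤ Csmall * (k:ℝ) ^ (-(1/4 : ℝ)) := h3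
    _ ≤ (Csmall + Cmain) * (k:ℝ) ^ (-(1/4 : ℝ)) := h4

end
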